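/- arXiv:1703.05062 — 4 statements merged into one kernel-verified Lean document; each statement's English description precedes it below -/
import Mathlib

section
/- Let E be a subset of F_q^n of cardinality N, with n ≥ 2, and let μ = N/q^(n-2). For a plane H chosen uniformly at random, E[|E ∩ H|^2] ≤ μ + μ^2. -/
open Module Finset
open scoped Classical

set_option linter.unusedSectionVars false
set_option maxHeartbeats 1000000

noncomputable section Stmt7Aux

variable (F : Type) [Field F] [Fintype F] (n : ℕ)

/-- The type of planes in `F^n`. -/
abbrev Planes := {H : AffineSubspace F (Fin n → F) // Module.finrank F H.direction = 2}

instance : Finite (AffineSubspace F (Fin n → F)) :=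
  Finite.of_injective _ (SetLike.coe_injective (A := AffineSubspace F (Fin n → F)))

instance : Fintype (Planes F n) := Fintype.ofFinite _

variable {F n}

/-- Transitivity of `GL(V)` on nonzero vectors. -/
lemma exists_linEquiv {F V : Type*} [Field F] [AddCommGroup V] [Module F V]
    (u w : V) (hu : u ≠ 0) (hw : w ≠ 0) : ∃ g : V ≃ₗ[F] V, g u = w := by
  by_cases h : w ∈ Submodule.span F ({u} : Set V)
  · obtain ⟨c, hc⟩ := Submodule.mem_span_singleton.1 h
    have hc0 : c ≠ 0 := by rintro rfl; simp at hc; exact hw hc.symm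
    exact ⟨LinearEquiv.smulOfNeZero F V c hc0, hc⟩
  · have hwu : w ∉ ({u} : Set V) := by
      intro hmem
      exact h (Submodule.subset_span hmem)
    have hs : LinearIndepOn F id (insert w ({u} : Set V)) :=
      (linearIndepOn_id_insert hwu).2 ⟨(linearIndepOn_singleton_iff F).2 hu, h⟩
    let b := Basis.extend hs
    have hui : u ∈ hs.extend (Set.subset_univ _) :=
      hs.subset_extend _ (by simp)
    have hwi : w ∈ hs.extend (Set.subset_univ _) :=
      hs.subset_extend _ (by simp)
    refine ⟨b.equiv b (Equiv.swap ⟨u, hui⟩ ⟨w, hwi⟩), ?_⟩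
    have h1 : b ⟨u, hui⟩ = u := Basis.extend_apply_self hs _
    have h2 : b ⟨w, hwi⟩ = w := Basis.extend_apply_self hs _
    have h3 := congrArg (b.equiv b (Equiv.swap ⟨u, hui⟩ ⟨w, hwi⟩)) h1
    rw [Basis.equiv_apply, Equiv.swap_apply_left, h2] at h3
    exact h3.symm

/-- Pushing a plane forward by an affine automorphism. -/
def planePush (e : (Fin n → F) ≃ᵃ[F] (Fin n → F)) (H : Planes F n) : Planes F n :=
  ⟨H.1.map e.toAffineMap, by
    rw [AffineSubspace.map_direction, AffineEquiv.linear_toAffineMap,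
      LinearEquiv.finrank_map_eq, H.2]⟩

lemma mem_planePush (e : (Fin n → F) ≃ᵃ[F] (Fin n → F)) (H : Planes F n) (x : Fin n → F) :
    x ∈ H.1 ↔ e x ∈ (planePush e H).1 := by
  simp only [planePush, AffineSubspace.mem_map, AffineEquiv.coe_toAffineMap]
  exact ⟨fun h => ⟨x, h, rfl⟩, fun ⟨y, hy, hxy⟩ => by rwa [← e.injective hxy]⟩

lemma planePush_symm (e : (Fin n → F) ≃ᵃ[F] (Fin n → F)) (H : Planes F n) :
    planePush e.symm (planePush e H) = H := by
  apply Subtype.ext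
  show (H.1.map e.toAffineMap).map e.symm.toAffineMap = H.1
  rw [AffineSubspace.map_map]
  have : e.symm.toAffineMap.comp e.toAffineMap = AffineMap.id F (Fin n → F) := by
    ext x; simp
  rw [this, AffineSubspace.map_id]

/-- The number of planes containing two given (not necessarily distinct) points. -/
def cnt (x y : Fin n → F) : ℕ := Nat.card {H : Planes F n // x ∈ H.1 ∧ y ∈ H.1}

lemma cnt_map (e : (Fin n → F) ≃ᵃ[F] (Fin n → F)) (x y : Fin n → F) :
    cnt (e x) (e y) = cnt x y := by
  apply Nat.card_congr
  refine Equiv.symm ⟨fun H => ⟨planePush e H.1, ?_, ?_⟩,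
    fun H => ⟨planePush e.symm H.1, ?_, ?_⟩, fun H => ?_, fun H => ?_⟩
  · exact (mem_planePush e H.1 x).1 H.2.1
  · exact (mem_planePush e H.1 y).1 H.2.2
  · have := (mem_planePush e.symm H.1 (e x)).1 H.2.1
    rwa [e.symm_apply_apply] at this
  · have := (mem_planePush e.symm H.1 (e y)).1 H.2.2
    rwa [e.symm_apply_apply] at this
  · exact Subtype.ext (planePush_symm e H.1)
  · apply Subtype.ext
    have h2 : e.symm.symm = e := rfl
    have := planePush_symm e.symm H.1
    rwa [h2] at this

lemma cnt_diag (x : Fin n → F) : cnt x x = cnt (0 : Fin n → F) 0 := by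
  have := cnt_map (AffineEquiv.constVAdd F (Fin n → F) x) 0 0
  simpa using this

lemma cnt_offdiag {x y z w : Fin n → F} (hxy : x ≠ y) (hzw : z ≠ w) :
    cnt x y = cnt z w := by
  obtain ⟨g, hg⟩ := exists_linEquiv (F := F) (y - x) (w - z)
    (sub_ne_zero.2 hxy.symm) (sub_ne_zero.2 hzw.symm)
  set e : (Fin n → F) ≃ᵃ[F] (Fin n → F) :=
    ((AffineEquiv.constVAdd F (Fin n → F) (-x)).trans g.toAffineEquiv).trans
      (AffineEquiv.constVAdd F (Fin n → F) z) with he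
  have hex : e x = z := by
    simp [he, AffineEquiv.trans_apply, AffineEquiv.constVAdd_apply]
  have hey : e y = w := by
    simp only [he, AffineEquiv.trans_apply, AffineEquiv.constVAdd_apply,
      LinearEquiv.coe_toAffineEquiv, vadd_eq_add]
    rw [show -x + y = y - x by ring, hg]; ring
  have := cnt_map e x y
  rw [hex, hey] at this
  exact this.symm

lemma plane_card (H : Planes F n) :
    (Finset.univ.filter (fun x => x ∈ H.1)).card = Fintype.card F ^ 2 := by
  have hne : H.1 ≠ ⊥ := by
    intro hb
    have h2 := H.2
    rw [hb, AffineSubspace.direction_bot] at h2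
    simp at h2
  obtain ⟨p, hp⟩ := (AffineSubspace.nonempty_iff_ne_bot H.1).2 hne
  have e : ↥(H.1.direction) ≃ {x : Fin n → F // x ∈ H.1} :=
    { toFun := fun v => ⟨v.1 +ᵥ p, AffineSubspace.vadd_mem_of_mem_direction v.2 hp⟩
      invFun := fun x => ⟨x.1 -ᵥ p, AffineSubspace.vsub_mem_direction x.2 hp⟩
      left_inv := fun v => by ext; simp
      right_inv := fun x => by ext; simp }
  calc (Finset.univ.filter (fun x => x ∈ H.1)).card
      = Fintype.card {x : Fin n → F // x ∈ H.1} := (Fintype.card_subtype _).symm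
    _ = Fintype.card ↥(H.1.direction) := (Fintype.card_congr e).symm
    _ = Fintype.card F ^ Module.finrank F H.1.direction := card_eq_pow_finrank
    _ = Fintype.card F ^ 2 := by rw [H.2]

lemma cnt_eq_sum (x y : Fin n → F) :
    cnt x y = ∑ H : Planes F n, if x ∈ H.1 ∧ y ∈ H.1 then 1 else 0 := by
  rw [cnt, Nat.card_eq_fintype_card, Fintype.card_subtype, Finset.card_filter]

lemma sum_diag :
    ∑ x : Fin n → F, cnt x x = Fintype.card (Planes F n) * Fintype.card F ^ 2 := by
  simp only [cnt_eq_sum]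
  rw [Finset.sum_comm]
  have h : ∀ H : Planes F n, (∑ x : Fin n → F, if x ∈ H.1 ∧ x ∈ H.1 then 1 else 0)
      = Fintype.card F ^ 2 := by
    intro H
    simp only [and_self]
    rw [← Finset.card_filter]
    exact plane_card H
  rw [Finset.sum_congr rfl (fun H _ => h H), Finset.sum_const, smul_eq_mul, Finset.card_univ]

lemma sum_all :
    ∑ x : Fin n → F, ∑ y : Fin n → F, cnt x y
      = Fintype.card (Planes F n) * Fintype.card F ^ 4 := by
  simp only [cnt_eq_sum]
  rw [Finset.sum_congr rfl (fun x _ => Finset.sum_comm), Finset.sum_comm]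
  have h : ∀ H : Planes F n,
      (∑ x : Fin n → F, ∑ y : Fin n → F, if x ∈ H.1 ∧ y ∈ H.1 then 1 else 0)
        = Fintype.card F ^ 4 := by
    intro H
    have : ∀ x y : Fin n → F, (if x ∈ H.1 ∧ y ∈ H.1 then (1:ℕ) else 0)
        = (if x ∈ H.1 then 1 else 0) * (if y ∈ H.1 then 1 else 0) := by
      intro x y
      by_cases hx : x ∈ H.1 <;> by_cases hy : y ∈ H.1 <;> simp [hx, hy]
    simp only [this]
    rw [← Finset.sum_mul_sum]
    have hc : (∑ i : Fin n → F, if i ∈ H.1 then (1:ℕ) else 0) = Fintype.card F ^ 2 := by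
      rw [← Finset.card_filter]; exact plane_card H
    rw [hc]; ring
  rw [Finset.sum_congr rfl (fun H _ => h H), Finset.sum_const, smul_eq_mul, Finset.card_univ]

end Stmt7Aux

/-- For `E ⊆ F_q^n` with `|E| = N`, `μ = N/q^(n-2)`, and a plane `H` chosen uniformly
at random among all planes of `F_q^n`, we have `E[|E ∩ H|²] ≤ μ + μ²`. -/
theorem stmt_7 (F : Type) [Field F] [Fintype F] (n : ℕ) (hn : 2 ≤ n)
    (E : Set (Fin n → F)) (N : ℕ) (hN : Nat.card E = N) (μ : ℝ)
    (hμ : μ = (N : ℝ) / (Fintype.card F : ℝ) ^ (n - 2)) :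
    (∑ᶠ H : {H : AffineSubspace F (Fin n → F) // Module.finrank F H.direction = 2},
        (Nat.card (E ∩ (H.1 : Set (Fin n → F)) : Set (Fin n → F)) : ℝ) ^ 2) /
      (Nat.card {H : AffineSubspace F (Fin n → F) // Module.finrank F H.direction = 2} : ℝ)
      ≤ μ + μ ^ 2 := by
  classical
  obtain ⟨m, rfl⟩ : ∃ m, n = m + 2 := ⟨n - 2, by omega⟩
  rw [Nat.add_sub_cancel] at hμ
  set q : ℕ := Fintype.card F with hq
  have hq2 : 2 ≤ q := Fintype.one_lt_card
  -- basic counts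
  have hVcard : Fintype.card (Fin (m + 2) → F) = q ^ (m + 2) := by
    rw [Fintype.card_fun, Fintype.card_fin]
  set A : ℕ := cnt (0 : Fin (m + 2) → F) 0 with hA
  have hv0 : (0 : Fin (m + 2) → F) ≠ (fun _ => (1 : F)) := by
    intro h
    exact one_ne_zero (congrFun h ⟨0, by omega⟩).symm
  set B : ℕ := cnt (0 : Fin (m + 2) → F) (fun _ => (1 : F)) with hB
  set T : ℕ := Nat.card (Planes F (m + 2)) with hT
  have hTc : Fintype.card (Planes F (m + 2)) = T := (Nat.card_eq_fintype_card).symm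
  -- identity (1): q^(m+2) * A = T * q^2
  have f1 : q ^ (m + 2) * A = T * q ^ 2 := by
    have := sum_diag (F := F) (n := m + 2)
    rw [Finset.sum_congr rfl (fun x _ => cnt_diag x), Finset.sum_const, smul_eq_mul,
      Finset.card_univ, hVcard, hTc] at this
    exact this
  -- identity (2): q^(m+2) * (A + (q^(m+2) - 1) * B) = T * q^4
  have f2 : q ^ (m + 2) * (A + (q ^ (m + 2) - 1) * B) = T * q ^ 4 := by
    have hsum := sum_all (F := F) (n := m + 2)
    have hinner : ∀ x : Fin (m + 2) → F, (∑ y : Fin (m + 2) → F, cnt x y) = A + (q ^ (m + 2) - 1) * B := by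
      intro x
      rw [← Finset.add_sum_erase _ _ (Finset.mem_univ x)]
      congr 1
      · exact cnt_diag x
      · rw [Finset.sum_congr rfl
          (fun y hy => cnt_offdiag (Ne.symm (Finset.mem_erase.1 hy).1) hv0),
          Finset.sum_const, smul_eq_mul, Finset.card_erase_of_mem (Finset.mem_univ x),
          Finset.card_univ, hVcard]
    rw [Finset.sum_congr rfl (fun x _ => hinner x), Finset.sum_const, smul_eq_mul,
      Finset.card_univ, hVcard, hTc] at hsum
    exact hsum
  -- the sum S
  set Et : Finset (Fin (m + 2) → F) := E.toFinset with hEt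
  have hEtcard : Et.card = N := by
    rw [hEt, Set.toFinset_card, ← Nat.card_eq_fintype_card, hN]
  set S : ℕ := ∑ H : Planes F (m + 2),
    (Nat.card (E ∩ (H.1 : Set (Fin (m + 2) → F)) : Set (Fin (m + 2) → F))) ^ 2 with hS
  have hcardEH : ∀ H : Planes F (m + 2),
      Nat.card (E ∩ (H.1 : Set (Fin (m + 2) → F)) : Set (Fin (m + 2) → F)) = ∑ x ∈ Et, (if x ∈ H.1 then 1 else 0) := by
    intro H
    rw [Nat.card_coe_set_eq, Set.ncard_eq_toFinset_card', ← Finset.card_filter]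
    congr 1
    ext x
    simp [hEt, Set.mem_toFinset]
  -- S as a double sum of cnt
  have hS2 : S = ∑ x ∈ Et, ∑ y ∈ Et, cnt x y := by
    rw [hS]
    have hHsq : ∀ H : Planes F (m + 2),
        (Nat.card (E ∩ (H.1 : Set (Fin (m + 2) → F)) : Set (Fin (m + 2) → F))) ^ 2
          = ∑ x ∈ Et, ∑ y ∈ Et, (if x ∈ H.1 ∧ y ∈ H.1 then 1 else 0) := by
      intro H
      rw [hcardEH H, sq, Finset.sum_mul_sum]
      refine Finset.sum_congr rfl fun x _ => Finset.sum_congr rfl fun y _ => ?_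
      by_cases hx : x ∈ H.1 <;> by_cases hy : y ∈ H.1 <;> simp [hx, hy]
    rw [Finset.sum_congr rfl (fun H _ => hHsq H), Finset.sum_comm]
    refine Finset.sum_congr rfl fun x _ => ?_
    rw [Finset.sum_comm]
    exact Finset.sum_congr rfl fun y _ => (cnt_eq_sum x y).symm
  -- bound S ≤ N * A + N * (N * B)
  have f3 : S ≤ N * A + N * (N * B) := by
    rw [hS2]
    calc ∑ x ∈ Et, ∑ y ∈ Et, cnt x y
        ≤ ∑ _x ∈ Et, (A + N * B) := by
          refine Finset.sum_le_sum fun x hx => ?_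
          rw [← Finset.add_sum_erase _ _ hx]
          have h1 : cnt x x = A := cnt_diag x
          have h2 : ∑ y ∈ Et.erase x, cnt x y ≤ N * B := by
            calc ∑ y ∈ Et.erase x, cnt x y
                = (Et.erase x).card * B := by
                  rw [Finset.sum_congr rfl
                    (fun y hy => cnt_offdiag (Ne.symm (Finset.mem_erase.1 hy).1) hv0),
                    Finset.sum_const, smul_eq_mul]
              _ ≤ N * B := by
                  have := Finset.card_erase_le (s := Et) (a := x)
                  exact Nat.mul_le_mul_right _ (le_trans this (le_of_eq hEtcard))
          omega
      _ = Et.card * (A + N * B) := by rw [Finset.sum_const, smul_eq_mul]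
      _ = N * A + N * (N * B) := by rw [hEtcard]; ring
  -- move to the reals
  rw [finsum_eq_sum_of_fintype]
  have hgoalsum : (∑ H : Planes F (m + 2),
      ((Nat.card (E ∩ (H.1 : Set (Fin (m + 2) → F)) : Set (Fin (m + 2) → F))) : ℝ) ^ 2) = (S : ℝ) := by
    rw [hS]
    push_cast
    rfl
  rw [hgoalsum]
  -- real versions of the identities
  have hqR : (2 : ℝ) ≤ (q : ℝ) := by exact_mod_cast hq2
  have hX : (0 : ℝ) < (q : ℝ) ^ m := by positivity
  have hone : 1 ≤ q ^ (m + 2) := Nat.one_le_pow _ _ (by omega)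
  have f1R : ((q : ℝ) ^ m * (q : ℝ) ^ 2) * A = T * (q : ℝ) ^ 2 := by
    have := congrArg (fun k : ℕ => (k : ℝ)) f1
    push_cast at this
    rw [← pow_add] at *
    convert this using 2
  have f2R : ((q : ℝ) ^ m * (q : ℝ) ^ 2) *
      ((A : ℝ) + ((q : ℝ) ^ m * (q : ℝ) ^ 2 - 1) * B) = T * (q : ℝ) ^ 4 := by
    have := congrArg (fun k : ℕ => (k : ℝ)) f2
    push_cast [hone] at this
    rw [← pow_add] at *
    convert this using 2
  set X : ℝ := (q : ℝ) ^ m with hXdef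
  -- A = T / X  (as X * A = T)
  have hXA : X * (A : ℝ) = T := by
    have hq2pos : (0 : ℝ) < (q : ℝ) ^ 2 := by positivity
    have : (X * (q : ℝ) ^ 2) * A = T * (q : ℝ) ^ 2 := f1R
    nlinarith [this]
  -- X * (X * q^2 - 1) * B = T * (q^2 - 1)
  have hXB : X * (X * (q : ℝ) ^ 2 - 1) * (B : ℝ) = T * ((q : ℝ) ^ 2 - 1) := by
    have hq2pos : (0 : ℝ) < (q : ℝ) ^ 2 := by positivity
    have expand : (X * (q : ℝ) ^ 2) * ((A : ℝ) + (X * (q : ℝ) ^ 2 - 1) * B)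
        = T * (q : ℝ) ^ 4 := f2R
    have : (q:ℝ)^4 = (q:ℝ)^2 * (q:ℝ)^2 := by ring
    nlinarith [expand, hXA]
  -- B * X^2 ≤ T
  have hBX : (B : ℝ) * X ^ 2 ≤ T := by
    have hXge1 : (1 : ℝ) ≤ X := by rw [hXdef]; exact one_le_pow₀ (by linarith : (1:ℝ) ≤ (q:ℝ))
    have hq4 : (4 : ℝ) ≤ (q : ℝ) ^ 2 := by nlinarith
    have hXq : (4 : ℝ) ≤ X * (q : ℝ) ^ 2 := by
      nlinarith [mul_le_mul hXge1 hq4 (by norm_num : (0:ℝ) ≤ 4) (le_of_lt hX)]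
    have hD : (0 : ℝ) < X * (X * (q : ℝ) ^ 2 - 1) := by nlinarith
    have hTnn : (0 : ℝ) ≤ T := Nat.cast_nonneg T
    rw [← mul_le_mul_iff_left₀ hD]
    have lhs_eq : (B : ℝ) * X ^ 2 * (X * (X * (q : ℝ) ^ 2 - 1))
        = X ^ 2 * (X * (X * (q : ℝ) ^ 2 - 1) * B) := by ring
    rw [lhs_eq, hXB]
    -- X^2 * (T * (q^2 - 1)) ≤ T * (X * (X * q^2 - 1)) ⟸ X ≤ X^2
    have hXX : X ≤ X ^ 2 := by nlinarith
    nlinarith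
  -- main bound: (S : ℝ) ≤ (μ + μ^2) * T
  have main : (S : ℝ) ≤ (μ + μ ^ 2) * T := by
    have hSR : (S : ℝ) ≤ (N : ℝ) * A + (N : ℝ) * ((N : ℝ) * B) := by
      exact_mod_cast Nat.cast_le.2 f3
    have hμT : μ * T = (N : ℝ) * A := by
      rw [hμ]
      field_simp
      nlinarith [hXA]
    have hμ2T : (N : ℝ) * ((N : ℝ) * B) ≤ μ ^ 2 * T := by
      rw [hμ]
      rw [div_pow, div_mul_eq_mul_div, le_div_iff₀ (by positivity : (0:ℝ) < X ^ 2)]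
      have hN2 : (0 : ℝ) ≤ (N : ℝ) ^ 2 := by positivity
      nlinarith [hBX, mul_le_mul_of_nonneg_left hBX hN2]
    linarith
  rcases eq_or_lt_of_le (Nat.cast_nonneg T : (0:ℝ) ≤ T) with hT0 | hTpos
  · rw [← hT0, div_zero]
    have hμ0 : 0 ≤ μ := by rw [hμ]; positivity
    nlinarith
  · rw [div_le_iff₀ hTpos]
    exact main
end

section
/- Let E ⊆ F_q^n with |E| = N and n ≥ 2, and let t be a real number with 0 < t < N/q^(n-2). Then the proportion of planes H in F_q^n with |E ∩ H| ≤ t is at most (N/q^(n-2)) / (N/q^(n-2) − t)^2. -/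
open Finset Module

set_option linter.unusedSectionVars false
set_option linter.unusedVariables false
set_option maxHeartbeats 1600000

attribute [local instance] Classical.propDecidable

variable {F V : Type} [Field F] [Fintype F] [AddCommGroup V] [Module F V] [Fintype V]


noncomputable instance : Fintype (Submodule F V) := by
  classical exact Fintype.ofInjective (SetLike.coe) SetLike.coe_injective

theorem span_pair_finrank (v u : V) (hv : v ≠ 0) (hu : u ∉ Submodule.span F {v}) :
    finrank F (Submodule.span F {v, u}) = 2 := by
  have hli : LinearIndependent F ![v, u] := by
    rw [LinearIndependent.pair_iff' hv]
    intro a ha; exact hu (ha ▸ Submodule.smul_mem _ a (Submodule.mem_span_singleton_self v))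
  have := finrank_span_eq_card hli
  rw [show Set.range ![v,u] = {v,u} by simp [Matrix.range_cons, Matrix.range_empty, Set.pair_comm u v]] at this
  simpa using this

theorem span_pair_unique (v u : V) (W : Submodule F V) (hW : finrank F W = 2)
    (hv : v ≠ 0) (hu : u ∉ Submodule.span F {v})
    (hvW : v ∈ W) (huW : u ∈ W) : W = Submodule.span F {v, u} := by
  have hle : Submodule.span F {v, u} ≤ W := by
    rw [Submodule.span_le]; rintro x (rfl | rfl) <;> simpa
  exact (Submodule.eq_of_le_of_finrank_le hle
    (by rw [hW, span_pair_finrank v u hv hu])).symm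

theorem cfun_mul (v : V) (hv : v ≠ 0) :
    ((univ.filter (fun W : Submodule F V => finrank F W = 2)).filter
        (fun W => v ∈ W)).card * (Fintype.card F ^ 2 - Fintype.card F)
      = Fintype.card V - Fintype.card F := by
  classical
  set q := Fintype.card F with hq
  set s : Finset (Submodule F V × V) := univ.filter
    (fun p => finrank F p.1 = 2 ∧ v ∈ p.1 ∧ p.2 ∈ p.1 ∧ p.2 ∉ Submodule.span F {v}) with hs
  have spanle : ∀ W : Submodule F V, v ∈ W → Submodule.span F {v} ≤ W := fun W h => by
    rw [Submodule.span_le]; simpa [Set.singleton_subset_iff]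
  have cardW : ∀ W : Submodule F V, (univ.filter (fun u => u ∈ W)).card = Fintype.card W :=
    fun W => (Fintype.card_subtype _).symm
  have cardspan : (univ.filter (fun u : V => u ∈ Submodule.span F {v})).card = q := by
    rw [cardW, card_eq_pow_finrank (K := F) (V := Submodule.span F {v}),
      finrank_span_singleton hv, pow_one]
  have h1 : s.card = ((univ.filter (fun W : Submodule F V => finrank F W = 2)).filter
      (fun W => v ∈ W)).card * (q ^ 2 - q) := by
    rw [card_eq_sum_card_fiberwise (f := Prod.fst)
      (t := (univ.filter (fun W : Submodule F V => finrank F W = 2)).filter (fun W => v ∈ W))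
      (fun p hp => by
        simp only [hs, Finset.mem_coe, mem_filter, mem_univ, true_and] at hp ⊢
        exact ⟨hp.1, hp.2.1⟩)]
    rw [Finset.sum_congr rfl (fun W hW => ?_), sum_const, smul_eq_mul]
    simp only [mem_filter, mem_univ, true_and] at hW
    have e1 : (s.filter (fun p => p.1 = W)).card
        = ((univ.filter (fun u : V => u ∈ W)) \ (univ.filter (fun u : V => u ∈ Submodule.span F {v}))).card := by
      apply card_bij (fun p _ => p.2)
      · rintro ⟨W', u⟩ hp
        simp only [hs, mem_filter, mem_univ, true_and, mem_sdiff] at hp ⊢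
        obtain ⟨⟨_, _, h3, h4⟩, rfl⟩ := hp
        exact ⟨h3, h4⟩
      · rintro ⟨W1, u1⟩ h1 ⟨W2, u2⟩ h2 h
        simp only [hs, mem_filter] at h1 h2
        exact Prod.ext (h1.2.trans h2.2.symm) h
      · intro u hu
        simp only [mem_sdiff, mem_filter, mem_univ, true_and] at hu
        refine ⟨⟨W, u⟩, ?_, rfl⟩
        simp only [hs, mem_filter, mem_univ, true_and]
        exact ⟨⟨hW.1, hW.2, hu.1, hu.2⟩, trivial⟩
    rw [e1, card_sdiff_of_subset ?_, cardW, cardspan, card_eq_pow_finrank (K := F) (V := W), hW.1]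
    intro u h
    simp only [mem_filter, mem_univ, true_and] at h ⊢
    exact spanle W hW.2 h
  have h2 : s.card = (univ.filter (fun u : V => u ∉ Submodule.span F {v})).card := by
    rw [card_eq_sum_card_fiberwise (f := Prod.snd)
      (t := univ.filter (fun u : V => u ∉ Submodule.span F {v}))
      (fun p hp => by
        simp only [hs, Finset.mem_coe, mem_filter, mem_univ, true_and] at hp ⊢
        exact hp.2.2.2)]
    rw [Finset.sum_congr rfl (fun u hu => ?_), sum_const, smul_eq_mul, mul_one]
    simp only [mem_filter, mem_univ, true_and] at hu
    rw [card_eq_one]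
    refine ⟨⟨Submodule.span F {v, u}, u⟩, ?_⟩
    ext ⟨W, u'⟩
    simp only [hs, mem_filter, mem_univ, true_and, mem_singleton, Prod.mk.injEq]
    constructor
    · rintro ⟨⟨h1, h2, h3, h4⟩, rfl⟩
      exact ⟨span_pair_unique v u' W h1 hv h4 h2 h3, rfl⟩
    · rintro ⟨rfl, rfl⟩
      exact ⟨⟨span_pair_finrank v u' hv hu,
        Submodule.subset_span (by simp), Submodule.subset_span (by simp), hu⟩, rfl⟩
  have h3 : (univ.filter (fun u : V => u ∉ Submodule.span F {v})).card = Fintype.card V - q := by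
    rw [Finset.filter_not, card_sdiff_of_subset (filter_subset _ _), cardspan, card_univ]
  rw [← h1, h2, h3]


noncomputable instance : Fintype (AffineSubspace F V) := by
  classical exact Fintype.ofInjective (SetLike.coe) SetLike.coe_injective

-- L4: planes through a point x  <-> 2-dim subspaces
theorem planes_through_point (x : V) :
    ((univ.filter (fun H : AffineSubspace F V => finrank F H.direction = 2)).filter
        (fun H => x ∈ H)).card
      = (univ.filter (fun W : Submodule F V => finrank F W = 2)).card := by
  classical
  apply card_bij (fun H _ => H.direction)
  · intro H hH
    simp only [mem_filter, mem_univ, true_and] at hH ⊢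
    exact hH.1
  · intro H1 h1 H2 h2 h
    simp only [mem_filter, mem_univ, true_and] at h1 h2
    exact AffineSubspace.ext_of_direction_eq h ⟨x, h1.2, h2.2⟩
  · intro W hW
    simp only [mem_filter, mem_univ, true_and] at hW
    refine ⟨AffineSubspace.mk' x W, ?_, ?_⟩
    · simp only [mem_filter, mem_univ, true_and]
      refine ⟨?_, AffineSubspace.self_mem_mk' x W⟩
      rw [AffineSubspace.direction_mk']
      exact hW
    · rw [AffineSubspace.direction_mk']

-- L5: planes through two distinct points x ≠ y <-> 2-dim subspaces containing y - x
theorem planes_through_pair (x y : V) (hxy : x ≠ y) :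
    ((univ.filter (fun H : AffineSubspace F V => finrank F H.direction = 2)).filter
        (fun H => x ∈ H ∧ y ∈ H)).card
      = ((univ.filter (fun W : Submodule F V => finrank F W = 2)).filter
          (fun W => y - x ∈ W)).card := by
  classical
  apply card_bij (fun H _ => H.direction)
  · intro H hH
    simp only [mem_filter, mem_univ, true_and] at hH ⊢
    refine ⟨hH.1, ?_⟩
    have := AffineSubspace.vsub_mem_direction hH.2.2 hH.2.1
    simpa using this
  · intro H1 h1 H2 h2 h
    simp only [mem_filter, mem_univ, true_and] at h1 h2
    exact AffineSubspace.ext_of_direction_eq h ⟨x, h1.2.1, h2.2.1⟩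
  · intro W hW
    simp only [mem_filter, mem_univ, true_and] at hW
    refine ⟨AffineSubspace.mk' x W, ?_, ?_⟩
    · simp only [mem_filter, mem_univ, true_and]
      refine ⟨?_, AffineSubspace.self_mem_mk' x W, ?_⟩
      · rw [AffineSubspace.direction_mk']; exact hW.1
      have := AffineSubspace.vadd_mem_mk' x hW.2
      simpa [sub_add_cancel] using this
    · rw [AffineSubspace.direction_mk']

-- L6: total planes: Pf.card * q^2 = Gf.card * card V
theorem planes_total :
    (univ.filter (fun H : AffineSubspace F V => finrank F H.direction = 2)).card
        * Fintype.card F ^ 2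
      = (univ.filter (fun W : Submodule F V => finrank F W = 2)).card * Fintype.card V := by
  classical
  rw [card_eq_sum_card_fiberwise (f := fun H : AffineSubspace F V => H.direction)
    (t := univ.filter (fun W : Submodule F V => finrank F W = 2))
    (fun H hH => by
      simp only [Finset.mem_coe, mem_filter, mem_univ, true_and] at hH ⊢
      exact hH)]
  rw [sum_mul]
  refine (Finset.sum_congr rfl (fun W hWmem => ?_)).trans (by rw [sum_const, smul_eq_mul])
  have hW : finrank F W = 2 := by simpa using hWmem
  -- fiber over W: planes with direction W; card * q^2 = card V
  have hWcard : Fintype.card W = Fintype.card F ^ 2 := by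
    rw [card_eq_pow_finrank (K := F) (V := W), hW]
  have key : ((univ.filter (fun H : AffineSubspace F V => finrank F H.direction = 2)).filter
      (fun H => H.direction = W)).card = Fintype.card (V ⧸ W) := by
    rw [← Finset.card_univ]
    symm
    apply card_bij (fun (z : V ⧸ W) _ => AffineSubspace.mk' z.out W)
    · intro z _
      simp only [mem_filter, mem_univ, true_and]
      constructor <;> rw [AffineSubspace.direction_mk']
      exact hW
    · intro z1 _ z2 _ h
      have h1 : z1.out ∈ AffineSubspace.mk' z2.out W := by
        rw [← h]; exact AffineSubspace.self_mem_mk' _ _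
      rw [AffineSubspace.mem_mk'] at h1
      have : (Submodule.Quotient.mk z1.out : V ⧸ W) = Submodule.Quotient.mk z2.out :=
        (Submodule.Quotient.eq W).2 (by simpa using h1)
      have e1 : (Submodule.Quotient.mk (Quotient.out z1) : V ⧸ W) = z1 := Quotient.out_eq' z1
      have e2 : (Submodule.Quotient.mk (Quotient.out z2) : V ⧸ W) = z2 := Quotient.out_eq' z2
      rwa [e1, e2] at this
    · intro H hH
      simp only [mem_filter, mem_univ, true_and] at hH
      obtain ⟨-, hdir⟩ := hH
      have hne : (H : Set V).Nonempty := by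
        rw [AffineSubspace.nonempty_iff_ne_bot]
        intro hbot
        rw [hbot, AffineSubspace.direction_bot] at hdir
        rw [← hdir] at hW
        simpa using hW
      obtain ⟨p, hp⟩ := hne
      refine ⟨Submodule.Quotient.mk p, mem_univ _, ?_⟩
      apply AffineSubspace.ext_of_direction_eq
      · rw [AffineSubspace.direction_mk', hdir]
      · refine ⟨(Submodule.Quotient.mk p : V ⧸ W).out, AffineSubspace.self_mem_mk' _ _, ?_⟩
        have hq : (Submodule.Quotient.mk ((Submodule.Quotient.mk p : V ⧸ W).out) : V ⧸ W)
            = Submodule.Quotient.mk p := Quotient.out_eq' _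
        rw [Submodule.Quotient.eq] at hq
        have hq' : (Submodule.Quotient.mk p : V ⧸ W).out - p ∈ H.direction := hdir ▸ hq
        have := AffineSubspace.vadd_mem_of_mem_direction hq' hp
        simpa [sub_add_cancel] using this
  rw [key]
  have hcv := Submodule.card_eq_card_quotient_mul_card (M := V) W
  simp only [Nat.card_eq_fintype_card] at hcv
  rw [hcv, hWcard]; ring




theorem Gcard_mul :
    (univ.filter (fun W : Submodule F V => finrank F W = 2)).card
        * (Fintype.card F ^ 2 - 1) * (Fintype.card F ^ 2 - Fintype.card F)
      = (Fintype.card V - 1) * (Fintype.card V - Fintype.card F) := by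
  classical
  set q := Fintype.card F with hq
  set s : Finset (Submodule F V × V) := univ.filter
    (fun p => finrank F p.1 = 2 ∧ p.2 ∈ p.1 ∧ p.2 ≠ 0) with hs
  have h1 : s.card = (univ.filter (fun W : Submodule F V => finrank F W = 2)).card * (q ^ 2 - 1) := by
    rw [card_eq_sum_card_fiberwise (f := Prod.fst)
      (t := univ.filter (fun W : Submodule F V => finrank F W = 2))
      (fun p hp => by
        simp only [hs, Finset.mem_coe, mem_filter, mem_univ, true_and] at hp ⊢
        exact hp.1)]
    refine (Finset.sum_congr rfl (fun W hWmem => ?_)).trans (by rw [sum_const, smul_eq_mul])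
    have hW : finrank F W = 2 := by simpa using hWmem
    have e1 : (s.filter (fun p => p.1 = W)).card
        = ((univ.filter (fun u : V => u ∈ W)) \ (univ.filter (fun u : V => u = 0))).card := by
      apply card_bij (fun p _ => p.2)
      · rintro ⟨W', u⟩ hp
        simp only [hs, mem_filter, mem_univ, true_and, mem_sdiff] at hp ⊢
        obtain ⟨⟨_, h3, h4⟩, rfl⟩ := hp
        exact ⟨h3, h4⟩
      · rintro ⟨W1, u1⟩ ha ⟨W2, u2⟩ hb h
        simp only [hs, mem_filter] at ha hb
        exact Prod.ext (ha.2.trans hb.2.symm) h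
      · intro u hu
        simp only [mem_sdiff, mem_filter, mem_univ, true_and] at hu
        refine ⟨⟨W, u⟩, ?_, rfl⟩
        simp only [hs, mem_filter, mem_univ, true_and]
        exact ⟨⟨hW, hu.1, hu.2⟩, trivial⟩
    have e0 : (univ.filter (fun u : V => u = 0)) = {0} := by ext u; simp
    rw [e1, e0, card_sdiff_of_subset (by simp [Finset.singleton_subset_iff, W.zero_mem]), card_singleton,
      show (univ.filter (fun u : V => u ∈ W)).card = Fintype.card W from (Fintype.card_subtype _).symm,
      card_eq_pow_finrank (K := F) (V := W), hW]
  have h2 : s.card = ∑ v ∈ univ.filter (fun v : V => v ≠ 0),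
      ((univ.filter (fun W : Submodule F V => finrank F W = 2)).filter (fun W => v ∈ W)).card := by
    rw [card_eq_sum_card_fiberwise (f := Prod.snd)
      (t := univ.filter (fun v : V => v ≠ 0))
      (fun p hp => by
        simp only [hs, Finset.mem_coe, mem_filter, mem_univ, true_and] at hp ⊢
        exact hp.2.2)]
    refine Finset.sum_congr rfl (fun v hv => ?_)
    have hv0 : v ≠ 0 := by simpa using hv
    apply card_bij (fun p _ => p.1)
    · rintro ⟨W', u⟩ hp
      simp only [hs, mem_filter, mem_univ, true_and] at hp ⊢
      obtain ⟨⟨h1, h2, h3⟩, rfl⟩ := hp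
      exact ⟨h1, h2⟩
    · rintro ⟨W1, u1⟩ ha ⟨W2, u2⟩ hb h
      simp only [hs, mem_filter] at ha hb
      exact Prod.ext h (ha.2.trans hb.2.symm)
    · intro W hW
      simp only [mem_filter, mem_univ, true_and] at hW
      refine ⟨⟨W, v⟩, ?_, rfl⟩
      simp only [hs, mem_filter, mem_univ, true_and]
      exact ⟨⟨hW.1, hW.2, hv0⟩, trivial⟩
  have h3 : s.card * (q ^ 2 - q) = (Fintype.card V - 1) * (Fintype.card V - q) := by
    rw [h2, sum_mul]
    rw [Finset.sum_congr rfl (fun v hv => cfun_mul v (by simpa using hv)), sum_const, smul_eq_mul]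
    congr 1
    rw [Finset.filter_not, card_sdiff_of_subset (filter_subset _ _), card_univ]
    congr 1
    rw [show (univ.filter (fun u : V => u = 0)) = {0} from by ext u; simp, card_singleton]
  rw [← h1, h3]


-- sum of |E ∩ H| over planes H
theorem sum_inter (Ef : Finset V) :
    ∑ H ∈ univ.filter (fun H : AffineSubspace F V => finrank F H.direction = 2),
        (Ef.filter (fun x => x ∈ H)).card
      = Ef.card * (univ.filter (fun W : Submodule F V => finrank F W = 2)).card := by
  classical
  conv_lhs => rw [Finset.sum_congr rfl (fun H _ => card_filter (fun x => x ∈ H) Ef)]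
  rw [Finset.sum_comm]
  refine (Finset.sum_congr rfl (fun x _ => ?_)).trans (by rw [sum_const, smul_eq_mul])
  rw [← card_filter]
  exact planes_through_point (F := F) (V := V) x

theorem sum_inter_sq (Ef : Finset V) :
    (∑ H ∈ univ.filter (fun H : AffineSubspace F V => finrank F H.direction = 2),
        (Ef.filter (fun x => x ∈ H)).card ^ 2) * (Fintype.card F ^ 2 - Fintype.card F)
      = Ef.card * (univ.filter (fun W : Submodule F V => finrank F W = 2)).card
          * (Fintype.card F ^ 2 - Fintype.card F)
        + (Ef.card ^ 2 - Ef.card) * (Fintype.card V - Fintype.card F) := by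
  classical
  set q := Fintype.card F with hq
  set G := (univ.filter (fun W : Submodule F V => finrank F W = 2)).card with hG
  set Pf := univ.filter (fun H : AffineSubspace F V => finrank F H.direction = 2) with hPf
  have step1 : ∀ H : AffineSubspace F V, (Ef.filter (fun x => x ∈ H)).card ^ 2
      = ∑ p ∈ Ef ×ˢ Ef, (if p.1 ∈ H ∧ p.2 ∈ H then 1 else 0) := by
    intro H
    rw [sq, card_filter, Finset.sum_mul_sum, ← Finset.sum_product']
    refine Finset.sum_congr rfl (fun p _ => ?_)
    by_cases h1 : p.1 ∈ H <;> by_cases h2 : p.2 ∈ H <;> simp [h1, h2]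
  rw [Finset.sum_congr rfl (fun H _ => step1 H), Finset.sum_comm]
  have step2 : ∀ p : V × V, p ∈ Ef ×ˢ Ef →
      (∑ H ∈ Pf, if p.1 ∈ H ∧ p.2 ∈ H then 1 else 0) * (q ^ 2 - q)
        = if p.1 = p.2 then G * (q ^ 2 - q) else Fintype.card V - q := by
    rintro ⟨x, y⟩ _
    rw [← card_filter]
    by_cases hxy : x = y
    · subst hxy
      rw [if_pos rfl]
      have e : (Pf.filter (fun H => x ∈ H ∧ x ∈ H)) = Pf.filter (fun H => x ∈ H) := by
        apply filter_congr; intro H _; simp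
      rw [e, hPf, planes_through_point x, hG]
    · rw [if_neg hxy]
      rw [hPf, planes_through_pair x y hxy]
      exact cfun_mul (y - x) (sub_ne_zero.2 (Ne.symm hxy))
  rw [Finset.sum_mul, Finset.sum_congr rfl step2]
  rw [Finset.sum_ite, Finset.sum_const, Finset.sum_const, smul_eq_mul, smul_eq_mul]
  have diag : ((Ef ×ˢ Ef).filter (fun p => p.1 = p.2)).card = Ef.card := by
    apply card_bij (fun p _ => p.1)
    · rintro ⟨x, y⟩ hp
      simp only [mem_filter, mem_product] at hp
      exact hp.1.1
    · rintro ⟨x1, y1⟩ hmem1 ⟨x2, y2⟩ hmem2 h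
      simp only [mem_filter, mem_product] at hmem1 hmem2
      obtain ⟨-, e1⟩ := hmem1
      obtain ⟨-, e2⟩ := hmem2
      subst e1; subst e2
      simp only at h
      rw [h]
    · intro x hx
      exact ⟨⟨x, x⟩, by simp [hx], rfl⟩
  have offdiag : ((Ef ×ˢ Ef).filter (fun p => ¬ p.1 = p.2)).card = Ef.card ^ 2 - Ef.card := by
    rw [filter_not, card_sdiff_of_subset (filter_subset _ _), card_product, diag, sq]
  rw [diag, offdiag]
  ring


theorem cheb_alg (Qr k g S2r Nr : ℝ) (hQ : 2 ≤ Qr) (hk : 1 ≤ k) (hg : 1 ≤ g)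
    (hN : 0 ≤ Nr) (hNN : 0 ≤ Nr ^ 2 - Nr)
    (hC : S2r * (Qr^2 - Qr) = Nr*g*(Qr^2-Qr) + (Nr^2-Nr)*(k*Qr^2-Qr))
    (hD : g*(Qr^2-1)*(Qr^2-Qr) = (k*Qr^2-1)*(k*Qr^2-Qr)) :
    S2r * k ≤ Nr*g*k + g*Nr^2 := by
  have hQ2 : 0 < Qr^2 - Qr := by nlinarith
  have hQ1 : 0 < Qr^2 - 1 := by nlinarith
  have hkQ : 0 ≤ k*Qr^2 - Qr := by nlinarith
  have hc1 : (Nr^2-Nr)*(k*(Qr^2-1)) ≤ Nr^2*(k*Qr^2-1) := by nlinarith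
  have hc2 : (Nr^2-Nr)*(k*(Qr^2-1))*(k*Qr^2-Qr) ≤ Nr^2*((k*Qr^2-1)*(k*Qr^2-Qr)) := by
    nlinarith [mul_le_mul_of_nonneg_right hc1 hkQ]
  rw [← hD] at hc2
  have hC2 : S2r*(Qr^2-Qr)*(k*(Qr^2-1)) = (Nr*g*(Qr^2-Qr) + (Nr^2-Nr)*(k*Qr^2-Qr))*(k*(Qr^2-1)) := by
    rw [hC]
  have hfin : S2r*k*((Qr^2-Qr)*(Qr^2-1)) ≤ (Nr*g*k + g*Nr^2)*((Qr^2-Qr)*(Qr^2-1)) := by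
    nlinarith [hc2, hC2]
  exact le_of_mul_le_mul_right hfin (mul_pos hQ2 hQ1)

theorem cheb_main (Qr k g P0 B0 S1 S2 Nr t : ℝ)
    (hQ : 2 ≤ Qr) (hk : 1 ≤ k) (hg : 1 ≤ g) (hN : 0 ≤ Nr) (hNN : 0 ≤ Nr^2 - Nr)
    (hP0 : P0 = g * k)
    (hB : S1 = Nr * g)
    (hC : S2 * (Qr^2-Qr) = Nr*g*(Qr^2-Qr) + (Nr^2-Nr)*(k*Qr^2-Qr))
    (hD : g*(Qr^2-1)*(Qr^2-Qr) = (k*Qr^2-1)*(k*Qr^2-Qr))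
    (ht0 : 0 < t) (ht : t < Nr / k)
    (hB0 : B0 * ((Nr/k - t)^2) ≤ S2 - 2*(Nr/k)*S1 + P0*(Nr/k)^2)
    (hB0nn : 0 ≤ B0) :
    B0 / P0 ≤ (Nr/k) / (Nr/k - t)^2 := by
  have hk0 : (0:ℝ) < k := by linarith
  have hg0 : (0:ℝ) < g := by linarith
  have hmain := cheb_alg Qr k g S2 Nr hQ hk hg hN hNN hC hD
  have hvar : S2 - 2*(Nr/k)*S1 + P0*(Nr/k)^2 ≤ P0*(Nr/k) := by
    have heq : S2 - 2*(Nr/k)*S1 + P0*(Nr/k)^2 = (S2*k - 2*Nr*S1 + g*Nr^2)/k := by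
      rw [hP0]; field_simp
    have heq2 : P0*(Nr/k) = g*Nr := by rw [hP0]; field_simp
    rw [heq, heq2, div_le_iff₀ hk0, hB]
    nlinarith [hmain]
  have hP0pos : (0:ℝ) < P0 := by rw [hP0]; positivity
  have hμt : (0:ℝ) < (Nr/k - t)^2 := by
    have h1 : (0:ℝ) < Nr/k - t := by linarith
    positivity
  rw [div_le_div_iff₀ hP0pos hμt]
  calc B0 * (Nr/k - t)^2 ≤ P0*(Nr/k) := le_trans hB0 hvar
    _ = Nr/k * P0 := by ring

/-- Chebyshev consequence: for `E ⊆ F_q^n` with `|E| = N` and `0 < t < N/q^(n-2)`,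
the proportion of planes `H` with `|E ∩ H| ≤ t` is at most
`(N/q^(n-2)) / (N/q^(n-2) − t)²`. -/
theorem stmt_8 (F : Type) [Field F] [Fintype F] (n : ℕ) (hn : 2 ≤ n)
    (E : Set (Fin n → F)) (N : ℕ) (hN : Nat.card E = N) (t : ℝ)
    (ht0 : 0 < t) (ht : t < (N : ℝ) / (Fintype.card F : ℝ) ^ (n - 2)) :
    (Nat.card {H : AffineSubspace F (Fin n → F) //
          Module.finrank F H.direction = 2 ∧
            (Nat.card (E ∩ (H : Set (Fin n → F)) : Set (Fin n → F)) : ℝ) ≤ t} : ℝ) /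
      (Nat.card {H : AffineSubspace F (Fin n → F) // Module.finrank F H.direction = 2} : ℝ)
      ≤ ((N : ℝ) / (Fintype.card F : ℝ) ^ (n - 2)) /
          ((N : ℝ) / (Fintype.card F : ℝ) ^ (n - 2) - t) ^ 2 := by
  classical
  set q := Fintype.card F with hq
  have hq2 : 2 ≤ q := Fintype.one_lt_card
  set Pf : Finset (AffineSubspace F (Fin n → F)) :=
    univ.filter (fun H => finrank F H.direction = 2) with hPf
  set Gf : Finset (Submodule F (Fin n → F)) :=
    univ.filter (fun W => finrank F W = 2) with hGf
  set Ef : Finset (Fin n → F) := Set.toFinset E with hEf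
  set e : AffineSubspace F (Fin n → F) → ℕ := fun H => (Ef.filter (fun x => x ∈ H)).card with he
  have hEcard : Ef.card = N := by
    rw [hEf, Set.toFinset_card, ← Nat.card_eq_fintype_card, hN]
  have hcardV : Fintype.card (Fin n → F) = q ^ n := by
    rw [Fintype.card_fun, Fintype.card_fin]
  have heN : ∀ H : AffineSubspace F (Fin n → F),
      Nat.card (E ∩ (H : Set (Fin n → F)) : Set (Fin n → F)) = e H := by
    intro H
    rw [Nat.card_eq_fintype_card, ← Set.toFinset_card]
    congr 1
    ext x
    simp [hEf, Set.mem_toFinset]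
  -- numerator and denominator as Finset cards
  set Sf : Finset (AffineSubspace F (Fin n → F)) :=
    Pf.filter (fun H => ((e H : ℝ) ≤ t)) with hSf
  have hnum : Nat.card {H : AffineSubspace F (Fin n → F) //
      finrank F H.direction = 2 ∧
        (Nat.card (E ∩ (H : Set (Fin n → F)) : Set (Fin n → F)) : ℝ) ≤ t} = Sf.card := by
    rw [Nat.card_eq_fintype_card, Fintype.card_subtype, hSf, hPf, filter_filter]
    congr 1
    apply Finset.filter_congr
    intro H _
    rw [heN H]
  have hden : Nat.card {H : AffineSubspace F (Fin n → F) //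
      finrank F H.direction = 2} = Pf.card := by
    rw [Nat.card_eq_fintype_card, Fintype.card_subtype, hPf]
  -- natural number identities
  have hA : Pf.card * q ^ 2 = Gf.card * q ^ n := by
    rw [hPf, hGf, planes_total, hcardV]
  have hBn : ∑ H ∈ Pf, e H = N * Gf.card := by
    rw [hPf, hGf, he, sum_inter, hEcard]
  have hCn : (∑ H ∈ Pf, e H ^ 2) * (q ^ 2 - q)
      = N * Gf.card * (q ^ 2 - q) + (N ^ 2 - N) * (q ^ n - q) := by
    rw [hPf, hGf, he, sum_inter_sq, hEcard, hcardV]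
  have hDn : Gf.card * (q ^ 2 - 1) * (q ^ 2 - q) = (q ^ n - 1) * (q ^ n - q) := by
    rw [hGf, Gcard_mul, hcardV]
  -- positivity facts
  have hq1 : 1 ≤ q := le_trans (by norm_num) hq2
  have hqq2 : q ≤ q ^ 2 := by nlinarith
  have hq2q : 2 * q ≤ q ^ 2 := by nlinarith
  have hq2n : q ^ 2 ≤ q ^ n := Nat.pow_le_pow_right hq1 hn
  have hqn : q ≤ q ^ n := le_trans hqq2 hq2n
  have hNN2 : N ≤ N ^ 2 := by nlinarith
  have hGpos : 1 ≤ Gf.card := by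
    by_contra h
    have h0 : Gf.card = 0 := by omega
    rw [h0] at hDn
    simp only [zero_mul] at hDn
    exact absurd hDn.symm (Nat.mul_ne_zero (by omega) (by omega))
  have hPpos : 1 ≤ Pf.card := by
    by_contra h
    have h0 : Pf.card = 0 := by omega
    rw [h0, zero_mul] at hA
    rcases Nat.mul_eq_zero.1 hA.symm with h1 | h1
    · omega
    · have : q ^ n ≠ 0 := by positivity
      exact this h1
  -- real versions
  have hQr2 : (2:ℝ) ≤ (q:ℝ) := by exact_mod_cast hq2
  have hk1 : (1:ℝ) ≤ (q:ℝ)^(n-2) := one_le_pow₀ (by exact_mod_cast hq1)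
  have hkQ2 : ((q:ℝ))^(n-2) * (q:ℝ)^2 = (q:ℝ)^n := by
    rw [← pow_add]; congr 1; omega
  have hg1 : (1:ℝ) ≤ (Gf.card:ℝ) := by exact_mod_cast hGpos
  have hNr0 : (0:ℝ) ≤ (N:ℝ) := by positivity
  have hNN' : (0:ℝ) ≤ (N:ℝ)^2 - (N:ℝ) := by
    have h : ((N:ℝ)) ≤ (N:ℝ)^2 := by exact_mod_cast hNN2
    linarith
  have hQ0 : ((q:ℝ))^2 ≠ 0 := by positivity
  have hA' : ((Pf.card : ℕ):ℝ) = (Gf.card:ℝ) * (q:ℝ)^(n-2) := by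
    have h1 : ((Pf.card:ℝ)) * (q:ℝ)^2 = (Gf.card:ℝ) * ((q:ℝ)^(n-2) * (q:ℝ)^2) := by
      rw [hkQ2]; exact_mod_cast hA
    exact mul_right_cancel₀ hQ0 (h1.trans (by ring))
  have hB' : ((∑ H ∈ Pf, e H : ℕ):ℝ) = (N:ℝ) * (Gf.card:ℝ) := by exact_mod_cast hBn
  have hC' : ((∑ H ∈ Pf, e H ^ 2 : ℕ):ℝ) * ((q:ℝ)^2 - (q:ℝ))
      = (N:ℝ)*(Gf.card:ℝ)*((q:ℝ)^2-(q:ℝ))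
        + ((N:ℝ)^2-(N:ℝ))*((q:ℝ)^(n-2)*(q:ℝ)^2-(q:ℝ)) := by
    rw [hkQ2]
    have h1 := congrArg (fun x : ℕ => (x:ℝ)) hCn
    push_cast [Nat.cast_sub hqq2, Nat.cast_sub hNN2, Nat.cast_sub hqn] at h1
    exact_mod_cast h1
  have hD' : (Gf.card:ℝ)*((q:ℝ)^2-1)*((q:ℝ)^2-(q:ℝ))
      = ((q:ℝ)^(n-2)*(q:ℝ)^2-1)*((q:ℝ)^(n-2)*(q:ℝ)^2-(q:ℝ)) := by
    rw [hkQ2]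
    have h1 := congrArg (fun x : ℕ => (x:ℝ)) hDn
    push_cast [Nat.cast_sub hqq2, Nat.cast_sub hqn, Nat.cast_sub (le_trans hq1 hqq2),
      Nat.cast_sub (le_trans hq1 hqn)] at h1
    exact_mod_cast h1
  -- variance bound
  have hμpos : t < (N:ℝ) / (q:ℝ)^(n-2) := ht
  have hvarb : (Sf.card:ℝ) * (((N:ℝ)/(q:ℝ)^(n-2) - t)^2)
      ≤ ((∑ H ∈ Pf, e H ^ 2 : ℕ):ℝ) - 2*((N:ℝ)/(q:ℝ)^(n-2))*((∑ H ∈ Pf, e H : ℕ):ℝ)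
        + ((Pf.card:ℕ):ℝ)*((N:ℝ)/(q:ℝ)^(n-2))^2 := by
    have hstep1 : (Sf.card:ℝ) * (((N:ℝ)/(q:ℝ)^(n-2) - t)^2)
        ≤ ∑ H ∈ Sf, ((e H : ℝ) - (N:ℝ)/(q:ℝ)^(n-2))^2 := by
      rw [← nsmul_eq_mul, ← Finset.sum_const]
      apply Finset.sum_le_sum
      intro H hH
      have hle : (e H : ℝ) ≤ t := (Finset.mem_filter.1 hH).2
      have h2 : (N:ℝ)/(q:ℝ)^(n-2) - (e H : ℝ) ≥ (N:ℝ)/(q:ℝ)^(n-2) - t := by linarith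
      have h3 : (0:ℝ) < (N:ℝ)/(q:ℝ)^(n-2) - t := by linarith
      nlinarith [h2, h3]
    have hstep2 : ∑ H ∈ Sf, ((e H : ℝ) - (N:ℝ)/(q:ℝ)^(n-2))^2
        ≤ ∑ H ∈ Pf, ((e H : ℝ) - (N:ℝ)/(q:ℝ)^(n-2))^2 := by
      apply Finset.sum_le_sum_of_subset_of_nonneg (Finset.filter_subset _ _)
      intro H _ _
      exact sq_nonneg _
    have hstep3 : ∑ H ∈ Pf, ((e H : ℝ) - (N:ℝ)/(q:ℝ)^(n-2))^2
        = ((∑ H ∈ Pf, e H ^ 2 : ℕ):ℝ) - 2*((N:ℝ)/(q:ℝ)^(n-2))*((∑ H ∈ Pf, e H : ℕ):ℝ)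
          + ((Pf.card:ℕ):ℝ)*((N:ℝ)/(q:ℝ)^(n-2))^2 := by
      have expand : ∀ H ∈ Pf, ((e H : ℝ) - (N:ℝ)/(q:ℝ)^(n-2))^2
          = (e H : ℝ)^2 - 2*((N:ℝ)/(q:ℝ)^(n-2))*(e H : ℝ) + ((N:ℝ)/(q:ℝ)^(n-2))^2 := by
        intro H _; ring
      rw [Finset.sum_congr rfl expand]
      rw [Finset.sum_add_distrib, Finset.sum_sub_distrib, ← Finset.mul_sum,
        Finset.sum_const, nsmul_eq_mul]
      have c1 : ((∑ H ∈ Pf, e H ^ 2 : ℕ):ℝ) = ∑ H ∈ Pf, ((e H : ℝ))^2 := by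
        push_cast; rfl
      have c2 : ((∑ H ∈ Pf, e H : ℕ):ℝ) = ∑ H ∈ Pf, ((e H : ℝ)) := by
        push_cast; rfl
      rw [c1, c2]
    linarith [hstep1, hstep2, hstep3.le, hstep3.ge]
  rw [hnum, hden]
  exact cheb_main ((q:ℝ)) ((q:ℝ)^(n-2)) ((Gf.card:ℝ)) ((Pf.card:ℝ)) ((Sf.card:ℝ))
    ((∑ H ∈ Pf, e H : ℕ):ℝ) ((∑ H ∈ Pf, e H ^ 2 : ℕ):ℝ) ((N:ℝ)) t
    hQr2 hk1 hg1 hNr0 hNN' hA' hB' hC' hD' ht0 hμpos hvarb (by positivity)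
end

section
/- Let X ⊂ A^n be an absolutely irreducible hypersurface of degree d over F_q and H a plane over F_q with H ⊄ X. Then |(X ∩ H)(F_q)| ≤ max((d−1)q + (d²−d−2)√q + 2d−1, dq). In particular, if (d²−d−2)√q + 2d−1 ≤ q, then |(X ∩ H)(F_q)| ≤ dq. -/
open MvPolynomial Finset Polynomial

private lemma aux_td {F : Type} [Field F] {n m : ℕ} (φ : Fin n → MvPolynomial (Fin m) F)
    (hφ : ∀ i, (φ i).totalDegree ≤ 1) (f : MvPolynomial (Fin n) F) :
    (MvPolynomial.aeval φ f).totalDegree ≤ f.totalDegree := by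
  conv_lhs => rw [f.as_sum]
  rw [map_sum]
  refine (MvPolynomial.totalDegree_finset_sum _ _).trans (Finset.sup_le fun v hv => ?_)
  rw [MvPolynomial.aeval_monomial, MvPolynomial.algebraMap_eq]
  calc (MvPolynomial.C (MvPolynomial.coeff v f) * v.prod fun i k => φ i ^ k).totalDegree
      ≤ (MvPolynomial.C (MvPolynomial.coeff v f)).totalDegree
        + (v.prod fun i k => φ i ^ k).totalDegree := MvPolynomial.totalDegree_mul _ _
    _ = (∏ i ∈ v.support, φ i ^ v i).totalDegree := by
        rw [MvPolynomial.totalDegree_C, zero_add]; rfl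
    _ ≤ ∑ i ∈ v.support, (φ i ^ v i).totalDegree := MvPolynomial.totalDegree_finset_prod _ _
    _ ≤ ∑ i ∈ v.support, v i := by
        refine Finset.sum_le_sum fun i _ => (MvPolynomial.totalDegree_pow _ _).trans ?_
        calc v i * (φ i).totalDegree ≤ v i * 1 := Nat.mul_le_mul_left _ (hφ i)
          _ = v i := Nat.mul_one _
    _ ≤ f.totalDegree := MvPolynomial.le_totalDegree hv

private lemma SZ2 {F : Type} [Field F] [Fintype F] (g : MvPolynomial (Fin 2) F) (hg : g ≠ 0) :
    Nat.card {x : F × F // MvPolynomial.eval ![x.1, x.2] g = 0}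
      ≤ g.totalDegree * Fintype.card F := by
  classical
  set q := Fintype.card F with hq
  set P := MvPolynomial.finSuccEquiv F 1 g with hPdef
  have hP0 : P ≠ 0 := by
    intro h
    apply hg
    have := congrArg (MvPolynomial.finSuccEquiv F 1).symm h
    simpa [hPdef] using this
  set k := P.natDegree with hk
  set lead := P.leadingCoeff with hleaddef
  have hlead0 : lead ≠ 0 := Polynomial.leadingCoeff_ne_zero.mpr hP0
  have heval : ∀ x : F × F, MvPolynomial.eval ![x.1, x.2] g
      = Polynomial.eval x.1 (Polynomial.map (MvPolynomial.eval ![x.2]) P) :=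
    fun x => MvPolynomial.eval_eq_eval_mv_eval' ![x.2] x.1 g
  -- univariate version of `lead`
  set L := MvPolynomial.finSuccEquiv F 0 lead with hLdef
  have hL0 : L ≠ 0 := by
    intro h
    apply hlead0
    have := congrArg (MvPolynomial.finSuccEquiv F 0).symm h
    simpa [hLdef] using this
  have hevinj : Function.Injective (MvPolynomial.eval (![] : Fin 0 → F)) := by
    intro a b h
    obtain ⟨a', rfl⟩ := MvPolynomial.C_surjective (Fin 0) a
    obtain ⟨b', rfl⟩ := MvPolynomial.C_surjective (Fin 0) b
    simpa using h
  set ul := Polynomial.map (MvPolynomial.eval (![] : Fin 0 → F)) L with huldef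
  have hul0 : ul ≠ 0 := by
    rw [huldef, Ne, Polynomial.map_eq_zero_iff hevinj]
    exact hL0
  have hulev : ∀ t : F, Polynomial.eval t ul = MvPolynomial.eval ![t] lead := fun t =>
    (MvPolynomial.eval_eq_eval_mv_eval' ![] t lead).symm
  have huldeg : ul.natDegree ≤ lead.totalDegree := by
    refine (Polynomial.natDegree_map_le).trans ?_
    rw [hLdef, MvPolynomial.natDegree_finSuccEquiv]
    exact MvPolynomial.degreeOf_le_totalDegree _ _
  have hdsum : lead.totalDegree + k ≤ g.totalDegree :=
    MvPolynomial.totalDegree_coeff_finSuccEquiv_add_le g k hlead0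
  -- counting
  set Z := Finset.univ.filter (fun x : F × F => MvPolynomial.eval ![x.1, x.2] g = 0) with hZ
  set T := Finset.univ.filter (fun t : F => MvPolynomial.eval ![t] lead = 0) with hTdef
  set A := Finset.univ.filter (fun x : F × F => MvPolynomial.eval ![x.2] lead = 0) with hA
  set B := Finset.univ.filter (fun x : F × F =>
    MvPolynomial.eval ![x.2] lead ≠ 0 ∧ MvPolynomial.eval ![x.1, x.2] g = 0) with hB
  have hcard : Nat.card {x : F × F // MvPolynomial.eval ![x.1, x.2] g = 0} = Z.card := by
    rw [Nat.card_eq_fintype_card, Fintype.card_subtype]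
  have hsub : Z ⊆ A ∪ B := by
    intro x hx
    simp only [hZ, hA, hB, Finset.mem_filter, Finset.mem_univ, true_and,
      Finset.mem_union] at *
    by_cases h : MvPolynomial.eval ![x.2] lead = 0
    · exact Or.inl h
    · exact Or.inr ⟨h, hx⟩
  have hTcard : T.card ≤ lead.totalDegree := by
    have hsubT : T ⊆ ul.roots.toFinset := by
      intro t ht
      simp only [hTdef, Finset.mem_filter, Finset.mem_univ, true_and] at ht
      rw [Multiset.mem_toFinset, Polynomial.mem_roots hul0]
      rw [Polynomial.IsRoot, hulev t, ht]
    calc T.card ≤ ul.roots.toFinset.card := Finset.card_le_card hsubT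
      _ ≤ Multiset.card ul.roots := Multiset.toFinset_card_le _
      _ ≤ ul.natDegree := Polynomial.card_roots' ul
      _ ≤ lead.totalDegree := huldeg
  have hAcard : A.card ≤ q * lead.totalDegree := by
    have : A = Finset.univ ×ˢ T := by
      ext x
      simp [hA, hTdef, Finset.mem_product]
    rw [this, Finset.card_product]
    simpa [hq] using Nat.mul_le_mul_left q hTcard
  have hBcard : B.card ≤ q * k := by
    have hfib : B.card = ∑ t : F, (B.filter (fun x => x.2 = t)).card :=
      Finset.card_eq_sum_card_fiberwise (fun x _ => Finset.mem_univ x.2)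
    rw [hfib]
    have hbound : ∀ t : F, (B.filter (fun x => x.2 = t)).card ≤ k := by
      intro t
      by_cases hlt : MvPolynomial.eval ![t] lead = 0
      · have : B.filter (fun x => x.2 = t) = ∅ := by
          ext x
          simp only [hB, Finset.mem_filter, Finset.mem_univ, true_and, Finset.notMem_empty,
            iff_false, not_and]
          rintro ⟨h1, h2⟩ rfl
          exact h1 hlt
        simp [this]
      · set Pt := Polynomial.map (MvPolynomial.eval ![t]) P with hPt
        have hPt0 : Pt ≠ 0 := by
          intro h
          apply hlt
          have := congrArg (fun r => Polynomial.coeff r k) h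
          simp [hPt, Polynomial.coeff_map] at this
          exact this
        have step : (B.filter (fun x => x.2 = t)).card ≤ Pt.roots.toFinset.card := by
          refine Finset.card_le_card_of_injOn Prod.fst (fun x hx => ?_) ?_
          · simp only [hB, Finset.mem_coe, Finset.mem_filter, Finset.mem_univ, true_and] at hx
            obtain ⟨⟨hx1, hx2⟩, hx3⟩ := hx
            rw [Finset.mem_coe, Multiset.mem_toFinset, Polynomial.mem_roots hPt0, Polynomial.IsRoot]
            rw [hPt, ← hx3, ← heval x]
            exact hx2
          · intro x hx y hy hxy
            simp only [hB, Finset.mem_coe, Finset.mem_filter] at hx hy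
            exact Prod.ext hxy (hx.2.trans hy.2.symm)
        calc (B.filter (fun x => x.2 = t)).card ≤ Pt.roots.toFinset.card := step
          _ ≤ Multiset.card Pt.roots := Multiset.toFinset_card_le _
          _ ≤ Pt.natDegree := Polynomial.card_roots' Pt
          _ ≤ k := Polynomial.natDegree_map_le
    calc ∑ t : F, (B.filter (fun x => x.2 = t)).card ≤ ∑ _t : F, k :=
          Finset.sum_le_sum fun t _ => hbound t
      _ = q * k := by simp [hq, mul_comm]
  calc Nat.card {x : F × F // MvPolynomial.eval ![x.1, x.2] g = 0} = Z.card := hcard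
    _ ≤ (A ∪ B).card := Finset.card_le_card hsub
    _ ≤ A.card + B.card := Finset.card_union_le _ _
    _ ≤ q * lead.totalDegree + q * k := Nat.add_le_add hAcard hBcard
    _ = q * (lead.totalDegree + k) := (Nat.mul_add _ _ _).symm
    _ ≤ q * g.totalDegree := Nat.mul_le_mul_left _ hdsum
    _ = g.totalDegree * q := Nat.mul_comm _ _
/-- For an absolutely irreducible hypersurface `X = {f = 0}` of degree `d` in `A^n`
over `F_q` and a plane `H = {p + s•u + t•v}` not contained in `X` (i.e. the restriction
of `f` to `H` is a nonzero polynomial in two variables), we have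
`|(X ∩ H)(F_q)| ≤ max((d−1)q + (d²−d−2)√q + 2d−1, dq)`; in particular
`|(X ∩ H)(F_q)| ≤ dq` provided `(d²−d−2)√q + 2d−1 ≤ q`. -/
theorem stmt_14 (F : Type) [Field F] [Fintype F] (n d : ℕ) (hn : 3 ≤ n)
    (f : MvPolynomial (Fin n) F)
    (hirr : Irreducible (MvPolynomial.map (algebraMap F (AlgebraicClosure F)) f))
    (hdeg : f.totalDegree = d)
    (p u v : Fin n → F) (huv : LinearIndependent F ![u, v])
    (hHX : (MvPolynomial.aeval
        (fun i => MvPolynomial.C (p i) + MvPolynomial.X 0 * MvPolynomial.C (u i)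
          + MvPolynomial.X 1 * MvPolynomial.C (v i)) f : MvPolynomial (Fin 2) F) ≠ 0) :
    (Nat.card {st : F × F // MvPolynomial.eval (p + st.1 • u + st.2 • v) f = 0} : ℝ)
      ≤ max (((d : ℝ) - 1) * (Fintype.card F : ℝ)
            + ((d : ℝ) ^ 2 - d - 2) * Real.sqrt (Fintype.card F) + 2 * d - 1)
          ((d : ℝ) * (Fintype.card F : ℝ)) ∧
    (((d : ℝ) ^ 2 - d - 2) * Real.sqrt (Fintype.card F) + 2 * d - 1 ≤ (Fintype.card F : ℝ) →
      (Nat.card {st : F × F // MvPolynomial.eval (p + st.1 • u + st.2 • v) f = 0} : ℝ)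
        ≤ (d : ℝ) * (Fintype.card F : ℝ)) := by
  classical
  set φ : Fin n → MvPolynomial (Fin 2) F := fun i =>
    MvPolynomial.C (p i) + MvPolynomial.X 0 * MvPolynomial.C (u i)
      + MvPolynomial.X 1 * MvPolynomial.C (v i) with hφ
  set g : MvPolynomial (Fin 2) F := MvPolynomial.aeval φ f with hgdef
  have hg0 : g ≠ 0 := hHX
  have hgd : g.totalDegree ≤ d := by
    rw [hgdef, ← hdeg]
    refine aux_td _ (fun i => ?_) f
    have hXC : ∀ (j : Fin 2) (c : F),
        ((MvPolynomial.X j : MvPolynomial (Fin 2) F) * MvPolynomial.C c).totalDegree ≤ 1 :=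
      fun j c => (MvPolynomial.totalDegree_mul _ _).trans
        (by simp [MvPolynomial.totalDegree_X, MvPolynomial.totalDegree_C])
    rw [hφ]
    refine (MvPolynomial.totalDegree_add _ _).trans
      (max_le ((MvPolynomial.totalDegree_add _ _).trans (max_le ?_ ?_)) ?_)
    · simp [MvPolynomial.totalDegree_C]
    · exact hXC 0 (u i)
    · exact hXC 1 (v i)
  have key : ∀ x : Fin 2 → F, MvPolynomial.eval x g
      = MvPolynomial.eval (fun i => p i + x 0 * u i + x 1 * v i) f := by
    intro x
    have hcomp : (MvPolynomial.eval x).comp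
        ((MvPolynomial.aeval φ : MvPolynomial (Fin n) F →ₐ[F] MvPolynomial (Fin 2) F) :
          MvPolynomial (Fin n) F →+* MvPolynomial (Fin 2) F)
        = MvPolynomial.eval (fun i => p i + x 0 * u i + x 1 * v i) := by
      apply MvPolynomial.ringHom_ext
      · intro a; simp
      · intro i; simp [hφ]
    exact RingHom.congr_fun hcomp f
  have hcond : ∀ st : F × F,
      (MvPolynomial.eval (p + st.1 • u + st.2 • v) f = 0)
        ↔ (MvPolynomial.eval ![st.1, st.2] g = 0) := by
    intro st
    rw [key ![st.1, st.2]]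
    have : (fun i => p i + (![st.1, st.2] : Fin 2 → F) 0 * u i
        + (![st.1, st.2] : Fin 2 → F) 1 * v i) = p + st.1 • u + st.2 • v := by
      funext i
      simp [Pi.add_apply, Pi.smul_apply, smul_eq_mul]
    rw [this]
  have hcardeq : Nat.card {st : F × F // MvPolynomial.eval (p + st.1 • u + st.2 • v) f = 0}
      = Nat.card {x : F × F // MvPolynomial.eval ![x.1, x.2] g = 0} :=
    Nat.card_congr (Equiv.subtypeEquivRight fun st => hcond st)
  have hnat : Nat.card {st : F × F // MvPolynomial.eval (p + st.1 • u + st.2 • v) f = 0}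
      ≤ d * Fintype.card F := by
    rw [hcardeq]
    exact (SZ2 g hg0).trans (Nat.mul_le_mul_right _ hgd)
  have hreal : (Nat.card {st : F × F // MvPolynomial.eval (p + st.1 • u + st.2 • v) f = 0} : ℝ)
      ≤ (d : ℝ) * (Fintype.card F : ℝ) := by
    calc (Nat.card {st : F × F // MvPolynomial.eval (p + st.1 • u + st.2 • v) f = 0} : ℝ)
        ≤ ((d * Fintype.card F : ℕ) : ℝ) := by exact_mod_cast hnat
      _ = (d : ℝ) * (Fintype.card F : ℝ) := by push_cast; ring
  exact ⟨hreal.trans (le_max_right _ _), fun _ => hreal⟩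
end

section
/- Let N, q, d, n be as follows: n ≥ 3, q a prime power, d ≥ 1, and 0 < α < 1, e > 0 reals with eα² > 1. Suppose N/q^(n-2) − d²/4 > α·N/q^(n-2) (which follows from N > d²q^(n-2)/(4(1−α))), and suppose that the proportion p of 'bad' planes satisfies p ≤ (N/q^(n-2))/((N/q^(n-2) − d²/4)²), and that N/q^(n-2) ≥ (1−p)(q − (d−1)(d−2)√q − d − 1). If additionally N > e·q^(n-2)/(eα²−1), then N > q^(n-1) − (d−1)(d−2)q^(n-3/2) − (d+1+e)q^(n-2). -/
/-- Arithmetic core of the lower forbidden-interval theorem. Here `N = #X(F_q)` and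
`p` is the proportion of bad planes; the hypotheses encode the Chebyshev bound and the
dichotomy lemma. -/
theorem stmt_16 (n q d : ℕ) (hn : 3 ≤ n) (hq : IsPrimePow q) (hd : 1 ≤ d)
    (N : ℕ) (α e p : ℝ) (hα0 : 0 < α) (hα1 : α < 1) (he : 0 < e)
    (heα : 1 < e * α ^ 2) (hp0 : 0 ≤ p) (hp1 : p ≤ 1)
    (h1 : (N : ℝ) / (q : ℝ) ^ (n - 2) - (d : ℝ) ^ 2 / 4
      > α * ((N : ℝ) / (q : ℝ) ^ (n - 2)))
    (h2 : p ≤ ((N : ℝ) / (q : ℝ) ^ (n - 2)) /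
      ((N : ℝ) / (q : ℝ) ^ (n - 2) - (d : ℝ) ^ 2 / 4) ^ 2)
    (h3 : (N : ℝ) / (q : ℝ) ^ (n - 2) ≥
      (1 - p) * ((q : ℝ) - ((d : ℝ) - 1) * ((d : ℝ) - 2) * Real.sqrt q - d - 1))
    (h4 : (N : ℝ) > e * (q : ℝ) ^ (n - 2) / (e * α ^ 2 - 1)) :
    (N : ℝ) > (q : ℝ) ^ (n - 1)
      - ((d : ℝ) - 1) * ((d : ℝ) - 2) * (q : ℝ) ^ ((n : ℝ) - 3 / 2)
      - ((d : ℝ) + 1 + e) * (q : ℝ) ^ (n - 2) := by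
  have hq1 : 1 < q := hq.one_lt
  have hq0 : (0:ℝ) < (q:ℝ) := by positivity
  set Q : ℝ := (q:ℝ) ^ (n - 2) with hQdef
  have hQ : 0 < Q := by positivity
  set M : ℝ := (N:ℝ) / Q with hMdef
  set S : ℝ := (q : ℝ) - ((d : ℝ) - 1) * ((d : ℝ) - 2) * Real.sqrt q - d - 1 with hSdef
  clear_value Q M S
  have hd1 : (1:ℝ) ≤ (d:ℝ) := by exact_mod_cast hd
  -- M > 0
  have hM0 : 0 < M := by nlinarith [h1, sq_nonneg ((d:ℝ))]
  have hMc : α * M < M - (d:ℝ)^2/4 := h1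
  have hαM0 : 0 < α * M := mul_pos hα0 hM0
  -- p ≤ 1/(α² M)  in product form:  p * (α² * M) ≤ 1
  have hsq : (α * M)^2 < (M - (d:ℝ)^2/4)^2 := by
    have := sq_lt_sq' (by nlinarith) hMc
    simpa using this
  have hden : 0 < (M - (d:ℝ)^2/4)^2 := lt_trans (by positivity) hsq
  have h2' : p * (M - (d:ℝ)^2/4)^2 ≤ M := (le_div_iff₀ hden).mp h2
  have hp' : p * (α^2 * M) ≤ 1 := by
    nlinarith [mul_le_mul_of_nonneg_left hsq.le hp0, hM0, mul_pos hM0 hM0]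
  -- M(eα² - 1) > e
  have heα1 : 0 < e * α^2 - 1 := by linarith
  have hNQ : e * Q < (N:ℝ) * (e * α^2 - 1) := (div_lt_iff₀ heα1).mp h4
  have hMe : e < M * (e * α^2 - 1) := by
    rw [hMdef, div_mul_eq_mul_div, lt_div_iff₀ hQ]
    linarith [hNQ]
  -- α² M > 1
  have hαM1 : 1 < α^2 * M := by
    by_contra hcon
    push_neg at hcon
    have h5 : e * (α^2 * M) ≤ e := mul_le_of_le_one_right he.le hcon
    linarith [hMe, h5, hM0]
  -- h3 in terms of M, S
  have h3' : (1 - p) * S ≤ M := h3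
  -- key : M > S - e
  have key : S - e < M := by
    rcases le_or_gt S 0 with hS | hS
    · linarith
    · have hαMpos : (0:ℝ) < α^2 * M := lt_trans one_pos hαM1
      have A := mul_le_mul_of_nonneg_right hp' hS.le
      have B := mul_le_mul_of_nonneg_right h3' hαMpos.le
      have C1 : S * (α^2 * M - 1) ≤ (α^2 * M) * M := by linarith [A, B]
      have C2 : (α^2 * M) * M < (M + e) * (α^2 * M - 1) := by linarith [hMe]
      have C3 : S * (α^2 * M - 1) < (M + e) * (α^2 * M - 1) := lt_of_le_of_lt C1 C2
      have C4 : S < M + e := lt_of_mul_lt_mul_right C3 (sub_pos.mpr hαM1).le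
      linarith
  -- translate back
  have hNM : (N:ℝ) = M * Q := by rw [hMdef, div_mul_cancel₀ _ hQ.ne']
  have hpow1 : (q:ℝ) ^ (n - 1) = (q:ℝ) * Q := by
    rw [hQdef, ← pow_succ']
    congr 1
    omega
  have hpow2 : (q:ℝ) ^ ((n : ℝ) - 3 / 2) = Real.sqrt q * Q := by
    have hcast : ((n : ℝ) - 3 / 2) = (1/2 : ℝ) + ((n - 2 : ℕ) : ℝ) := by
      have : ((n - 2 : ℕ) : ℝ) = (n : ℝ) - 2 := by
        have : (2:ℕ) ≤ n := by omega
        push_cast [Nat.cast_sub this]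
        ring
      rw [this]; ring
    rw [hcast, Real.rpow_add hq0, Real.rpow_natCast, ← Real.sqrt_eq_rpow, hQdef]
  rw [hNM, hpow1, hpow2]
  have h5 : (S - e) * Q < M * Q := by
    exact mul_lt_mul_of_pos_right key hQ
  calc (q:ℝ) * Q - ((d:ℝ)-1)*((d:ℝ)-2)*(Real.sqrt q * Q) - ((d:ℝ)+1+e)*Q
      = (S - e) * Q := by rw [hSdef]; ring
    _ < M * Q := h5
end
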